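/- Let (N, v) be a simple game on n players in which every minimal winning coalition has size exactly 3. Then there exists a payoff vector p : N → ℝ with p ≥ 0 such that p(W) = ∑_{i∈W} p_i ≥ 1 for every winning coalition W and p(L) = ∑_{i∈L} p_i ≤ n/4 for every losing coalition L. (Hence the critical threshold value satisfies α(N, v) ≤ n/4.) -/
import Mathlib

open Classical in
private lemma exists_minimal_winning {n : ℕ} (winning : Finset (Fin n) → Prop) :
    ∀ W, winning W → ∃ T, T ⊆ W ∧ winning T ∧ ∀ S ⊂ T, ¬ winning S := by
  intro W
  induction W using Finset.strongInductionOn with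
  | _ W ih =>
    intro hW
    by_cases h : ∀ S ⊂ W, ¬ winning S
    · exact ⟨W, subset_rfl, hW, h⟩
    · push_neg at h
      obtain ⟨S, hS, hSw⟩ := h
      obtain ⟨T, hT1, hT2, hT3⟩ := ih S hS hSw
      exact ⟨T, hT1.trans hS.subset, hT2, hT3⟩

/-- A simple game in which every minimal winning coalition has size 3 satisfies
α(N,v) ≤ n/4. -/
theorem alpha_le_quarter_of_all_min_winning_size_three (n : ℕ)
    (winning : Finset (Fin n) → Prop)
    (hmono : ∀ S T : Finset (Fin n), S ⊆ T → winning S → winning T)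
    (hempty : ¬ winning ∅) (hfull : winning Finset.univ)
    (hmin : ∀ W : Finset (Fin n), winning W → (∀ S ⊂ W, ¬ winning S) → W.card = 3) :
    ∃ p : Fin n → ℝ,
      (∀ i, 0 ≤ p i) ∧
      (∀ W : Finset (Fin n), winning W → 1 ≤ ∑ i ∈ W, p i) ∧
      (∀ L : Finset (Fin n), ¬ winning L → ∑ i ∈ L, p i ≤ (n : ℝ) / 4) := by
  classical
  -- the finset of losing coalitions
  set losers : Finset (Finset (Fin n)) := Finset.univ.filter (fun L => ¬ winning L) with hlosers
  have hne : losers.Nonempty := ⟨∅, by simp [hlosers, hempty]⟩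
  obtain ⟨Lmax, hLmem, hLmaxmax⟩ := Finset.exists_max_image losers Finset.card hne
  have hLmaxLosing : ¬ winning Lmax := by
    simpa [hlosers] using hLmem
  have hmaxcard : ∀ L : Finset (Fin n), ¬ winning L → L.card ≤ Lmax.card := by
    intro L hL
    exact hLmaxmax L (by simp [hlosers, hL])
  refine ⟨fun i => if i ∈ Lmax then (1/4 : ℝ) else 1/2, ?_, ?_, ?_⟩
  · intro i; dsimp only; split <;> norm_num
  · -- winning coalitions get at least 1
    intro W hW
    obtain ⟨T, hTW, hTwin, hTmin⟩ := exists_minimal_winning winning W hW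
    have hT3 : T.card = 3 := hmin T hTwin hTmin
    -- T is not contained in Lmax
    have hTnot : ¬ T ⊆ Lmax := fun h => hLmaxLosing (hmono T Lmax h hTwin)
    obtain ⟨j, hjT, hjL⟩ := Finset.not_subset.mp hTnot
    have hsub : (1 : ℝ) ≤ ∑ i ∈ T, (if i ∈ Lmax then (1/4 : ℝ) else 1/2) := by
      rw [← Finset.add_sum_erase T _ hjT]
      have h1 : (if j ∈ Lmax then (1/4 : ℝ) else 1/2) = 1/2 := if_neg hjL
      have h2 : ((T.erase j).card : ℝ) * (1/4) ≤
          ∑ i ∈ T.erase j, (if i ∈ Lmax then (1/4 : ℝ) else 1/2) := by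
        rw [← nsmul_eq_mul]
        refine Finset.card_nsmul_le_sum _ _ _ ?_
        intro i _; split <;> norm_num
      have hcard : (T.erase j).card = 2 := by
        rw [Finset.card_erase_of_mem hjT, hT3]
      rw [hcard] at h2
      rw [h1]
      push_cast at h2
      linarith
    have hnonneg : ∀ i ∈ W \ T, (0:ℝ) ≤ (if i ∈ Lmax then (1/4 : ℝ) else 1/2) := by
      intro i _; split <;> norm_num
    calc (1:ℝ) ≤ ∑ i ∈ T, (if i ∈ Lmax then (1/4 : ℝ) else 1/2) := hsub
      _ ≤ ∑ i ∈ W, (if i ∈ Lmax then (1/4 : ℝ) else 1/2) := by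
          refine Finset.sum_le_sum_of_subset_of_nonneg hTW ?_
          intro i _ _; split <;> norm_num
  · -- losing coalitions get at most n/4
    intro L hL
    have hsplit : ∑ i ∈ L, (if i ∈ Lmax then (1/4 : ℝ) else 1/2)
        = ((L ∩ Lmax).card : ℝ) * (1/4) + ((L \ Lmax).card : ℝ) * (1/2) := by
      rw [Finset.sum_ite, Finset.sum_const, Finset.sum_const]
      rw [Finset.filter_mem_eq_inter]
      have : L.filter (fun i => i ∉ Lmax) = L \ Lmax := by
        ext i; simp [Finset.mem_sdiff]
      rw [this]
      simp [nsmul_eq_mul]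
    rw [hsplit]
    -- cardinality facts
    have h1 : (L ∩ Lmax).card + (L \ Lmax).card = L.card := by
      rw [Finset.card_inter_add_card_sdiff]
    have h1' : (Lmax ∩ L).card + (Lmax \ L).card = Lmax.card := by
      rw [Finset.card_inter_add_card_sdiff]
    have hcomm : (Lmax ∩ L).card = (L ∩ Lmax).card := by rw [Finset.inter_comm]
    have hle : L.card ≤ Lmax.card := hmaxcard L hL
    have h2 : (L \ Lmax).card ≤ (Lmax \ L).card := by omega
    have h3 : (Lmax \ L).card + L.card = (Lmax ∪ L).card := by
      rw [Finset.card_sdiff_add_card]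
    have h4 : (Lmax ∪ L).card ≤ n := by
      simpa using Finset.card_le_univ (Lmax ∪ L)
    have key : (L ∩ Lmax).card + 2 * (L \ Lmax).card ≤ n := by omega
    have : (((L ∩ Lmax).card : ℝ) + 2 * ((L \ Lmax).card : ℝ)) ≤ (n : ℝ) := by
      exact_mod_cast key
    linarith
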